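/- Let C be the set of multisets of cardinality at most 2 over Fin 2, and let R ⊆ C × C be the set of non-flow irreversible reactions on 2 species, i.e. ordered pairs (s, t) with s ≠ t excluding the four pairs in which one of s, t is the empty multiset and the other a singleton (so |R| = 6·5 − 4 = 26). The symmetric group on Fin 2 acts on R by relabelling species (acting on each multiset elementwise). Then the number of orbits of this action on R equals 14. -/

import Mathlib

/-- The set of non-flow irreversible at most bimolecular reactions on 2 species:
ordered pairs of distinct multisets of cardinality at most 2 over `Fin 2`,
excluding the four flow reactions. -/
def R17 : Set (Multiset (Fin 2) × Multiset (Fin 2)) :=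
  {p | Multiset.card p.1 ≤ 2 ∧ Multiset.card p.2 ≤ 2 ∧ p.1 ≠ p.2 ∧
       ¬((p.1 = 0 ∧ Multiset.card p.2 = 1) ∨ (Multiset.card p.1 = 1 ∧ p.2 = 0))}

/-- The orbit of a reaction under the relabelling action of the symmetric group on
the two species. -/
def orbit17 (p : Multiset (Fin 2) × Multiset (Fin 2)) :
    Set (Multiset (Fin 2) × Multiset (Fin 2)) :=
  {q | ∃ σ : Equiv.Perm (Fin 2),
        q.1 = Multiset.map σ p.1 ∧ q.2 = Multiset.map σ p.2}

def S17 : Finset (Multiset (Fin 2)) := {0, {0}, {1}, {0,0}, {0,1}, {1,1}}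

lemma classify17 (m : Multiset (Fin 2)) (h : Multiset.card m ≤ 2) : m ∈ S17 := by
  induction m using Quotient.inductionOn with
  | h l =>
    change (l : Multiset (Fin 2)) ∈ S17
    match l, h with
    | [], _ => decide
    | [a], _ => fin_cases a <;> decide
    | [a,b], _ => fin_cases a <;> fin_cases b <;> decide
    | a::b::c::l, h => simp [Multiset.coe_card] at h

lemma cardS17 : ∀ m ∈ S17, Multiset.card m ≤ 2 := by decide

def F17 : Finset (Multiset (Fin 2) × Multiset (Fin 2)) :=
  (S17 ×ˢ S17).filter (fun p => p.1 ≠ p.2 ∧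
       ¬((p.1 = 0 ∧ Multiset.card p.2 = 1) ∨ (Multiset.card p.1 = 1 ∧ p.2 = 0)))

lemma R17_eq : R17 = ↑F17 := by
  ext p
  simp only [R17, F17, Set.mem_setOf_eq, Finset.coe_filter, Finset.mem_product,
    Set.mem_setOf_eq]
  constructor
  · rintro ⟨h1, h2, h3⟩
    exact ⟨⟨classify17 _ h1, classify17 _ h2⟩, h3⟩
  · rintro ⟨⟨h1, h2⟩, h3⟩
    exact ⟨cardS17 _ h1, cardS17 _ h2, h3⟩

def g17 (p : Multiset (Fin 2) × Multiset (Fin 2)) :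
    Finset (Multiset (Fin 2) × Multiset (Fin 2)) :=
  {p, (p.1.map (Equiv.swap 0 1), p.2.map (Equiv.swap 0 1))}

lemma perm_cases (σ : Equiv.Perm (Fin 2)) : σ = 1 ∨ σ = Equiv.swap 0 1 := by
  revert σ; decide

lemma orbit_eq (p : Multiset (Fin 2) × Multiset (Fin 2)) : orbit17 p = ↑(g17 p) := by
  ext q
  simp only [orbit17, g17, Set.mem_setOf_eq, Finset.coe_insert, Finset.coe_singleton,
    Set.mem_insert_iff, Set.mem_singleton_iff]
  constructor
  · rintro ⟨σ, h1, h2⟩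
    rcases perm_cases σ with rfl | rfl
    · left
      simp only [Equiv.Perm.coe_one, Multiset.map_id] at h1 h2
      exact Prod.ext h1 h2
    · right
      exact Prod.ext h1 h2
  · rintro (rfl | h)
    · exact ⟨1, by simp⟩
    · exact ⟨Equiv.swap 0 1, by rw [h]; exact ⟨rfl, rfl⟩⟩

/-- There are `6·5 − 4 = 26` non-flow reactions on 2 species, and the species-swap
action of the symmetric group has exactly 14 orbits on them. -/
theorem stmt_17 : R17.ncard = 26 ∧ (orbit17 '' R17).ncard = 14 := by
  rw [R17_eq]
  constructor
  · rw [Set.ncard_coe_finset]; decide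
  · have : orbit17 '' ↑F17 = (fun t : Finset _ => (↑t : Set _))
        '' ((F17.image g17 : Finset (Finset (Multiset (Fin 2) × Multiset (Fin 2)))) :
            Set (Finset (Multiset (Fin 2) × Multiset (Fin 2)))) := by
      rw [Finset.coe_image, ← Set.image_comp]
      ext x
      simp only [Set.mem_image, Function.comp]
      constructor
      · rintro ⟨p, hp, rfl⟩; exact ⟨p, hp, (orbit_eq p).symm⟩
      · rintro ⟨p, hp, rfl⟩; exact ⟨p, hp, orbit_eq p⟩
    rw [this, Set.ncard_image_of_injective _ Finset.coe_injective,
      Set.ncard_coe_finset]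
    decide
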